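/- Let (ρ_j)_{j≥1} be a sequence of nonnegative reals and (b_j) a square-summable sequence of complex numbers. Suppose there are constants a_0 and C such that |∫_0^1 Σ_j e^{-v(1-v) t ρ_j} |b_j|^2 dv − a_0| ≤ C t for all t ∈ (0,1]. Then a_0 = Σ_j |b_j|^2 and Σ_j ρ_j |b_j|^2 ≤ 6C. -/

import Mathlib

set_option maxHeartbeats 1000000

open Set MeasureTheory Filter Topology

lemma aux_poly (a₁ a₂ a₃ a₄ : ℝ) :
    ∫ v in (0:ℝ)..1, (a₁*v + a₂*v^2 + a₃*v^3 + a₄*v^4) = a₁/2 + a₂/3 + a₃/4 + a₄/5 := by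
  have h : ∀ v : ℝ, HasDerivAt (fun v : ℝ => a₁*v^2/2 + a₂*v^3/3 + a₃*v^4/4 + a₄*v^5/5)
      (a₁*v + a₂*v^2 + a₃*v^3 + a₄*v^4) v := by
    intro v
    have := (((((hasDerivAt_pow 2 v).const_mul a₁).div_const 2).add
      (((hasDerivAt_pow 3 v).const_mul a₂).div_const 3)).add
      (((hasDerivAt_pow 4 v).const_mul a₃).div_const 4)).add
      (((hasDerivAt_pow 5 v).const_mul a₄).div_const 5)
    exact this.congr_deriv (by norm_num; ring)
  rw [intervalIntegral.integral_eq_sub_of_hasDerivAt (fun v _ => h v)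
    ((Continuous.intervalIntegrable (by continuity) 0 1))]
  ring

lemma aux_exp_ub {x : ℝ} (hx : 0 ≤ x) : 1 - Real.exp (-x) ≤ x := by
  have := Real.add_one_le_exp (-x)
  linarith

lemma aux_exp_le_one {x : ℝ} (hx : 0 ≤ x) : Real.exp (-x) ≤ 1 :=
  Real.exp_le_one_iff.mpr (by linarith)

lemma aux_exp_lb {x : ℝ} (hx : 0 ≤ x) : x - x^2 ≤ 1 - Real.exp (-x) := by
  have h1 : x + 1 ≤ Real.exp x := Real.add_one_le_exp x
  have hpos : (0:ℝ) < x + 1 := by linarith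
  have h2 : Real.exp (-x) ≤ (x+1)⁻¹ := by
    rw [Real.exp_neg]
    exact inv_anti₀ hpos h1
  have h3 : x - x^2 ≤ 1 - (x+1)⁻¹ := by
    have : (x+1)⁻¹ ≤ 1 - x + x^2 := by
      rw [inv_le_iff_one_le_mul₀ hpos]
      nlinarith
    linarith
  linarith

private lemma g_bounds (t r c : ℝ) (ht : 0 ≤ t) (hr : 0 ≤ r) (hc : 0 ≤ c) :
    (t*r/6 - t^2*r^2/30) * c ≤ c - (∫ v in (0:ℝ)..1, Real.exp (-(v*(1-v)*t*r)) * c) ∧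
    c - (∫ v in (0:ℝ)..1, Real.exp (-(v*(1-v)*t*r)) * c) ≤ t*r*c ∧
    0 ≤ (∫ v in (0:ℝ)..1, Real.exp (-(v*(1-v)*t*r)) * c) ∧
    (∫ v in (0:ℝ)..1, Real.exp (-(v*(1-v)*t*r)) * c) ≤ c := by
  have hcont : Continuous fun v : ℝ => Real.exp (-(v*(1-v)*t*r)) * c := by fun_prop
  have hInt : IntervalIntegrable (fun v : ℝ => Real.exp (-(v*(1-v)*t*r)) * c) volume 0 1 :=
    hcont.intervalIntegrable 0 1
  have hx : ∀ v ∈ Icc (0:ℝ) 1, 0 ≤ v*(1-v)*t*r := fun v hv => by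
    have := hv.1; have := hv.2
    have : 0 ≤ v*(1-v) := mul_nonneg hv.1 (by linarith [hv.2])
    positivity
  have hdiff : c - (∫ v in (0:ℝ)..1, Real.exp (-(v*(1-v)*t*r)) * c)
      = ∫ v in (0:ℝ)..1, (1 - Real.exp (-(v*(1-v)*t*r))) * c := by
    simp only [sub_mul, one_mul]
    rw [intervalIntegral.integral_sub (intervalIntegrable_const) hInt,
      intervalIntegral.integral_const]
    simp
  have hIntd : IntervalIntegrable (fun v : ℝ => (1 - Real.exp (-(v*(1-v)*t*r))) * c) volume 0 1 :=
    Continuous.intervalIntegrable (by fun_prop) 0 1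
  refine ⟨?_, ?_, ?_, ?_⟩
  · rw [hdiff]
    have key : ((t*r*c)/2 + (-(t*r*c) - t^2*r^2*c)/3 + (2*t^2*r^2*c)/4 + (-(t^2*r^2*c))/5)
        ≤ ∫ v in (0:ℝ)..1, (1 - Real.exp (-(v*(1-v)*t*r))) * c := by
      rw [← aux_poly]
      apply intervalIntegral.integral_mono_on zero_le_one
        (Continuous.intervalIntegrable (by fun_prop) 0 1) hIntd
      intro v hv
      have h0 := hx v hv
      have h1 : (v*(1-v)*t*r - (v*(1-v)*t*r)^2) * c ≤ (1 - Real.exp (-(v*(1-v)*t*r))) * c :=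
        mul_le_mul_of_nonneg_right (aux_exp_lb h0) hc
      calc (t*r*c)*v + (-(t*r*c) - t^2*r^2*c)*v^2 + (2*t^2*r^2*c)*v^3 + (-(t^2*r^2*c))*v^4
          = (v*(1-v)*t*r - (v*(1-v)*t*r)^2) * c := by ring
        _ ≤ _ := h1
    calc (t*r/6 - t^2*r^2/30) * c
        = ((t*r*c)/2 + (-(t*r*c) - t^2*r^2*c)/3 + (2*t^2*r^2*c)/4 + (-(t^2*r^2*c))/5) := by ring
      _ ≤ _ := key
  · rw [hdiff]
    have key : (∫ v in (0:ℝ)..1, (1 - Real.exp (-(v*(1-v)*t*r))) * c)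
        ≤ ∫ v in (0:ℝ)..1, (t*r*c) := by
      apply intervalIntegral.integral_mono_on zero_le_one hIntd intervalIntegrable_const
      intro v hv
      have h0 := hx v hv
      have h1 : (1 - Real.exp (-(v*(1-v)*t*r))) * c ≤ (v*(1-v)*t*r) * c :=
        mul_le_mul_of_nonneg_right (aux_exp_ub h0) hc
      refine h1.trans ?_
      have hv1 : v*(1-v) ≤ 1 := by nlinarith [hv.1, hv.2]
      nlinarith [mul_nonneg (mul_nonneg ht hr) hc, mul_nonneg ht hr]
    simpa using key
  · apply intervalIntegral.integral_nonneg zero_le_one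
    intro v hv
    exact mul_nonneg (Real.exp_nonneg _) hc
  · have key : (∫ v in (0:ℝ)..1, Real.exp (-(v*(1-v)*t*r)) * c) ≤ ∫ v in (0:ℝ)..1, c := by
      apply intervalIntegral.integral_mono_on zero_le_one hInt intervalIntegrable_const
      intro v hv
      have h0 := hx v hv
      exact mul_le_of_le_one_left hc (aux_exp_le_one h0) |>.trans (le_refl c)
    simpa using key

private lemma interchange (ρ : ℕ → ℝ) (hρ : ∀ j, 0 ≤ ρ j) (c : ℕ → ℝ) (hc : ∀ j, 0 ≤ c j)
    (hsum : Summable c) (t : ℝ) (ht : 0 ≤ t) :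
    (∫ v in (0:ℝ)..1, ∑' j, Real.exp (-(v * (1 - v) * t * ρ j)) * c j)
      = ∑' j, ∫ v in (0:ℝ)..1, Real.exp (-(v * (1 - v) * t * ρ j)) * c j := by
  rw [intervalIntegral.integral_of_le zero_le_one]
  rw [MeasureTheory.integral_tsum]
  · exact tsum_congr fun j => (intervalIntegral.integral_of_le zero_le_one).symm
  · exact fun i => (Continuous.aestronglyMeasurable (by fun_prop))
  · have hbd : ∀ i, (∫⁻ v in Ioc (0:ℝ) 1, ‖Real.exp (-(v * (1 - v) * t * ρ i)) * c i‖₊)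
        ≤ ENNReal.ofReal (c i) := by
      intro i
      have : (∫⁻ v in Ioc (0:ℝ) 1, ‖Real.exp (-(v * (1 - v) * t * ρ i)) * c i‖₊)
          ≤ ∫⁻ _ in Ioc (0:ℝ) 1, ENNReal.ofReal (c i) := by
        apply setLIntegral_mono (by fun_prop) -- measurability?
        intro v hv
        have hx : 0 ≤ v * (1 - v) * t * ρ i := by
          have h1 : 0 ≤ v * (1 - v) := mul_nonneg hv.1.le (by linarith [hv.2])
          exact mul_nonneg (mul_nonneg h1 ht) (hρ i)
        have h0 : 0 ≤ Real.exp (-(v * (1 - v) * t * ρ i)) * c i :=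
          mul_nonneg (Real.exp_nonneg _) (hc i)
        rw [← enorm_eq_nnnorm, Real.enorm_eq_ofReal h0]
        apply ENNReal.ofReal_le_ofReal
        calc Real.exp (-(v * (1 - v) * t * ρ i)) * c i ≤ 1 * c i := by
              apply mul_le_mul_of_nonneg_right _ (hc i)
              exact Real.exp_le_one_iff.mpr (by linarith)
          _ = c i := one_mul _
      rwa [setLIntegral_const, Real.volume_Ioc, show ((1:ℝ)-0) = 1 by ring,
        ENNReal.ofReal_one, mul_one] at this
    have : (∑' i, ∫⁻ v in Ioc (0:ℝ) 1, ‖Real.exp (-(v * (1 - v) * t * ρ i)) * c i‖₊)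
        ≤ ∑' i, ENNReal.ofReal (c i) := ENNReal.tsum_le_tsum hbd
    rw [← ENNReal.ofReal_tsum_of_nonneg hc hsum] at this
    exact (this.trans_lt ENNReal.ofReal_lt_top).ne

/-- First-order heat trace bound implies `H¹`-type regularity of the spectral sequence:
if `|∫_0^1 ∑_j e^{-v(1-v)tρ_j}|b_j|² dv − a₀| ≤ C t` on `(0,1]`, then
`a₀ = ∑ |b_j|²` and `∑ ρ_j |b_j|² ≤ 6C`. -/
theorem stmt_2 (ρ : ℕ → ℝ) (hρ : ∀ j, 0 ≤ ρ j) (b : ℕ → ℂ)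
    (hb : Summable fun j => ‖b j‖ ^ 2) (a₀ C : ℝ)
    (h : ∀ t ∈ Ioc (0:ℝ) 1,
      |(∫ v in (0:ℝ)..1, ∑' j, Real.exp (-(v * (1 - v) * t * ρ j)) * ‖b j‖ ^ 2) - a₀|
        ≤ C * t) :
    a₀ = (∑' j, ‖b j‖ ^ 2) ∧
      Summable (fun j => ρ j * ‖b j‖ ^ 2) ∧
      (∑' j, ρ j * ‖b j‖ ^ 2) ≤ 6 * C := by
  have hc : ∀ j, (0:ℝ) ≤ ‖b j‖ ^ 2 := fun j => by positivity
  set g : ℝ → ℕ → ℝ := fun t j => ∫ v in (0:ℝ)..1, Real.exp (-(v*(1-v)*t*ρ j)) * ‖b j‖^2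
    with hgdef
  have hgb : ∀ t, 0 ≤ t → ∀ j,
      (t*ρ j/6 - t^2*(ρ j)^2/30) * ‖b j‖^2 ≤ ‖b j‖^2 - g t j ∧
      ‖b j‖^2 - g t j ≤ t*ρ j*‖b j‖^2 ∧ 0 ≤ g t j ∧ g t j ≤ ‖b j‖^2 :=
    fun t ht j => g_bounds t (ρ j) (‖b j‖^2) ht (hρ j) (hc j)
  have hgsum : ∀ t, 0 ≤ t → Summable (g t) := fun t ht =>
    hb.of_nonneg_of_le (fun j => (hgb t ht j).2.2.1) (fun j => (hgb t ht j).2.2.2)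
  have hS : ∀ t ∈ Ioc (0:ℝ) 1, |(∑' j, g t j) - a₀| ≤ C * t := by
    intro t ht
    rw [hgdef, ← interchange ρ hρ _ hc hb t ht.1.le]
    exact h t ht
  set L := ∑' j, ‖b j‖ ^ 2 with hL
  -- Part 1: a₀ = L
  have hu0 : Tendsto (fun n : ℕ => (1:ℝ)/(n+1)) atTop (𝓝 0) :=
    tendsto_one_div_add_atTop_nhds_zero_nat
  have huI : ∀ n : ℕ, (1:ℝ)/(n+1) ∈ Ioc (0:ℝ) 1 := fun n =>
    ⟨by positivity, by rw [div_le_one (by positivity)]; linarith [Nat.cast_nonneg (α := ℝ) n]⟩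
  have T1 : Tendsto (fun n : ℕ => ∑' j, g (1/(n+1)) j) atTop (𝓝 L) := by
    apply tendsto_tsum_of_dominated_convergence hb
    · intro j
      have h0 : Tendsto (fun n : ℕ => g (1/(n+1)) j - ‖b j‖^2) atTop (𝓝 0) := by
        apply squeeze_zero_norm (a := fun n : ℕ => (1/(n+1)) * (ρ j * ‖b j‖^2))
        · intro n
          have hn := hgb (1/(n+1)) (huI n).1.le j
          rw [Real.norm_eq_abs, abs_sub_comm, abs_of_nonneg (by linarith [hn.2.2.2])]
          calc ‖b j‖^2 - g (1/(n+1)) j ≤ (1/(n+1)) * ρ j * ‖b j‖^2 := hn.2.1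
            _ = (1/(n+1)) * (ρ j * ‖b j‖^2) := by ring
        · simpa using hu0.mul_const (ρ j * ‖b j‖^2)
      have := h0.add (tendsto_const_nhds (x := ‖b j‖^2))
      simpa using this
    · filter_upwards with n j
      have hn := hgb (1/(n+1)) (huI n).1.le j
      rw [Real.norm_eq_abs, abs_of_nonneg hn.2.2.1]
      exact hn.2.2.2
  have T2 : Tendsto (fun n : ℕ => ∑' j, g (1/(n+1)) j) atTop (𝓝 a₀) := by
    rw [← tendsto_sub_nhds_zero_iff]
    apply squeeze_zero_norm (a := fun n : ℕ => C * (1/(n+1)))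
    · intro n; exact hS _ (huI n)
    · simpa using (hu0.const_mul C)
  have ha : a₀ = L := tendsto_nhds_unique T2 T1
  -- Part 2
  have hfin : ∀ F : Finset ℕ, ∑ j ∈ F, ρ j * ‖b j‖^2 ≤ 6*C := by
    intro F
    set A := ∑ j ∈ F, ρ j/6 * ‖b j‖^2 with hA
    set B := ∑ j ∈ F, (ρ j)^2/30 * ‖b j‖^2 with hB
    have hB0 : 0 ≤ B := Finset.sum_nonneg fun j _ => by
      have := hc j; positivity
    have key : ∀ t ∈ Ioc (0:ℝ) 1, A - t*B ≤ C := by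
      intro t ht
      have h1 : ∑ j ∈ F, (t*ρ j/6 - t^2*(ρ j)^2/30) * ‖b j‖^2 ≤ ∑ j ∈ F, (‖b j‖^2 - g t j) :=
        Finset.sum_le_sum fun j _ => (hgb t ht.1.le j).1
      have h2 : ∑ j ∈ F, (‖b j‖^2 - g t j) ≤ ∑' j, (‖b j‖^2 - g t j) :=
        Summable.sum_le_tsum F (fun j _ => by linarith [(hgb t ht.1.le j).2.2.2])
          (hb.sub (hgsum t ht.1.le))
      have h3 : (∑' j, (‖b j‖^2 - g t j)) = L - ∑' j, g t j := Summable.tsum_sub hb (hgsum t ht.1.le)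
      have h4 : L - ∑' j, g t j ≤ C * t := by
        have := abs_le.mp (hS t ht)
        rw [ha] at *
        linarith [this.1]
      have h5 : ∑ j ∈ F, (t*ρ j/6 - t^2*(ρ j)^2/30) * ‖b j‖^2 = t*A - t^2*B := by
        rw [hA, hB, Finset.mul_sum, Finset.mul_sum, ← Finset.sum_sub_distrib]
        exact Finset.sum_congr rfl fun j _ => by ring
      have h6 : t*A - t^2*B ≤ C*t := by linarith
      have ht0 := ht.1
      nlinarith [h6]
    have hA6 : A ≤ C := by
      refine le_of_forall_pos_le_add fun ε hε => ?_
      set t := min 1 (ε/(B+1)) with htd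
      have ht0 : 0 < t := lt_min one_pos (div_pos hε (by linarith))
      have hkey := key t ⟨ht0, min_le_left _ _⟩
      have htB : t * B ≤ ε := by
        calc t * B ≤ (ε/(B+1)) * B := by
              apply mul_le_mul_of_nonneg_right (min_le_right _ _) hB0
          _ ≤ ε := by
              rw [div_mul_eq_mul_div, div_le_iff₀ (by linarith)]
              nlinarith
      linarith
    calc ∑ j ∈ F, ρ j * ‖b j‖^2 = 6 * A := by
          rw [hA, Finset.mul_sum]; exact Finset.sum_congr rfl fun j _ => by ring
      _ ≤ 6 * C := by linarith
  have hsum2 : Summable (fun j => ρ j * ‖b j‖^2) :=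
    summable_of_sum_le (fun j => mul_nonneg (hρ j) (hc j)) hfin
  exact ⟨ha, hsum2, Summable.tsum_le_of_sum_le hsum2 hfin⟩
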